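/- Assume g ∈ C²([0,∞)) satisfies (D1) g(t)>0, g'(t)≤0 and g''(t)≥0, (D2) g ∉ L¹(0,∞), and (D3) |d_t^k g(t)| ≤ C_k g(t)(1/(1+t))^k for k=1,2. Set h(t) = 1 − g'(t)/2. Then there exists C > 0 such that for every ξ, every C² solution û(·,ξ) of the Fourier-transformed equation, and all s ≤ t such that 3h(τ) ≤ g(τ)²|ξ|² ≤ 5h(τ) for all τ ∈ [s,t]: for real r ≥ 1, |ξ|^r |û(t,ξ)| ≤ C exp( −(|ξ|²/6)∫_s^t g(τ)dτ )( |ξ|^r|û(s,ξ)| + |ξ|^{r−1}|û_t(s,ξ)| ), and for real r ≥ 0, |ξ|^r |û_t(t,ξ)| ≤ C exp( −(|ξ|²/6)∫_s^t g(τ)dτ )( |ξ|^{r+1}|û(s,ξ)| + |ξ|^{r}|û_t(s,ξ)| ). -/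

import Mathlib

set_option maxHeartbeats 1000000

open Set MeasureTheory

private lemma sq_le_imp {a b : ℝ} (hb : 0 ≤ b) (h : a^2 ≤ b^2) : a ≤ b :=
  le_trans (le_abs_self a) (by nlinarith [abs_nonneg a, sq_abs a])

private lemma core_ineq (G G' G'' k Xn Yn P a : ℝ)
    (hG : 0 < G) (hG'' : 0 ≤ G'') (hk : 0 < k)
    (hh1 : 1 ≤ 1 - G'/2)
    (h3 : 3*(1-G'/2) ≤ G^2*k^2) (h5 : G^2*k^2 ≤ 5*(1-G'/2))
    (hXn : 0 ≤ Xn) (hYn : 0 ≤ Yn) (hCS : P^2 ≤ Yn*Xn)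
    (ha0 : 0 ≤ a) (ha2 : a^2 = (1-G'/2)*k^2) (hale : a ≤ (3/5)*(G*k^2)) :
    2*((G^2*k^4/4 - (1-G'/2)*k^2)*P - (G*(k^2/2))*Yn)
      + (-(G''/2)*(k^2/4)*Xn + (1-G'/2)*(k^2/4)*(2*(P - G*(k^2/2)*Xn)))
      + k^2/3*G*(Yn + (1-G'/2)*(k^2/4)*Xn) ≤ 0 := by
  have hk2 : 0 < k^2 := by positivity
  have hcu : 2*(G^2*k^4/4 - (1-G'/2)*k^2) + (1-G'/2)*(k^2/2) ≤ (1-G'/2)*k^2 := by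
    nlinarith [mul_le_mul_of_nonneg_right h5 hk2.le]
  have hcl : -((1-G'/2)*k^2) ≤ 2*(G^2*k^4/4 - (1-G'/2)*k^2) + (1-G'/2)*(k^2/2) := by
    nlinarith [mul_le_mul_of_nonneg_right h3 hk2.le]
  have hb0 : 0 ≤ a^2*Xn + 4*Yn := by positivity
  have hbc2 : (4*a*P)^2 ≤ (a^2*Xn + 4*Yn)^2 := by
    nlinarith [sq_nonneg (a^2*Xn - 4*Yn), mul_nonneg (sq_nonneg a) (sub_nonneg.2 hCS)]
  have hbc2' : (4*a*(-P))^2 ≤ (a^2*Xn + 4*Yn)^2 := by nlinarith [hbc2]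
  have hP4 : 4*a*P ≤ a^2*Xn + 4*Yn := sq_le_imp hb0 hbc2
  have hP4' : 4*a*(-P) ≤ a^2*Xn + 4*Yn := sq_le_imp hb0 hbc2'
  have haP : a*|P| ≤ (a^2*Xn + 4*Yn)/4 := by
    rcases abs_cases P with ⟨he, _⟩ | ⟨he, _⟩ <;> rw [he] <;>
      [linarith only [hP4]; nlinarith [hP4']]
  have habs : |2*(G^2*k^4/4 - (1-G'/2)*k^2) + (1-G'/2)*(k^2/2)| ≤ (1-G'/2)*k^2 := by
    rw [abs_le]; exact ⟨by linarith only [hcl], hcu⟩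
  have h7 : (2*(G^2*k^4/4 - (1-G'/2)*k^2) + (1-G'/2)*(k^2/2))*P
      ≤ a*((a^2*Xn + 4*Yn)/4) := by
    calc (2*(G^2*k^4/4 - (1-G'/2)*k^2) + (1-G'/2)*(k^2/2))*P
        ≤ |(2*(G^2*k^4/4 - (1-G'/2)*k^2) + (1-G'/2)*(k^2/2))*P| := le_abs_self _
      _ = |2*(G^2*k^4/4 - (1-G'/2)*k^2) + (1-G'/2)*(k^2/2)| * |P| := abs_mul _ _
      _ ≤ ((1-G'/2)*k^2) * |P| := mul_le_mul_of_nonneg_right habs (abs_nonneg P)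
      _ = a^2 * |P| := by rw [ha2]
      _ = a*(a*|P|) := by ring
      _ ≤ a*((a^2*Xn + 4*Yn)/4) := mul_le_mul_of_nonneg_left haP ha0
  have h8 : a*((a^2*Xn + 4*Yn)/4) ≤ (3/5)*(G*k^2)*((a^2*Xn + 4*Yn)/4) :=
    mul_le_mul_of_nonneg_right hale (by positivity)
  have h9 : (2*(G^2*k^4/4 - (1-G'/2)*k^2) + (1-G'/2)*(k^2/2))*P
      ≤ (3/5)*(G*k^2)*(((1-G'/2)*k^2*Xn + 4*Yn)/4) := by
    have h10 := le_trans h7 h8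
    rwa [ha2] at h10
  have pos1 : 0 ≤ G*k^2*Yn := mul_nonneg (mul_nonneg hG.le (sq_nonneg k)) hYn
  have pos2 : 0 ≤ G*(k^2*(k^2*((1-G'/2)*Xn))) :=
    mul_nonneg hG.le (mul_nonneg (sq_nonneg k) (mul_nonneg (sq_nonneg k)
      (mul_nonneg (by linarith only [hh1]) hXn)))
  have pos3 : 0 ≤ G''*(k^2*Xn) := mul_nonneg hG'' (mul_nonneg (sq_nonneg k) hXn)
  nlinarith [h9, pos1, pos2, pos3]

private lemma aux_psis (σ A B W hh : ℝ) (hσ : 1 ≤ σ) (hA : 0 ≤ A) (hB : 0 ≤ B) (hW : 0 ≤ W)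
    (hhσ : hh ≤ σ^2) (hWle : W ≤ B + (5/4*σ)*A) :
    W^2 + hh*(A^2/4) ≤ ((7/4*σ+1)*(A+B))^2 := by
  have h1 : W^2 ≤ (B + (5/4*σ)*A)^2 := by
    have hb : 0 ≤ B + (5/4*σ)*A := by positivity
    nlinarith [mul_le_mul_of_nonneg_left hWle hW, mul_le_mul_of_nonneg_right hWle hb]
  nlinarith [h1, mul_nonneg (sub_nonneg.2 hhσ) (sq_nonneg A), mul_nonneg hA hB,
    sq_nonneg (σ*A), sq_nonneg (σ*B), mul_nonneg (mul_nonneg hA hA) (by linarith : (0:ℝ) ≤ σ),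
    mul_nonneg (mul_nonneg hA hB) (by linarith : (0:ℝ) ≤ σ),
    mul_nonneg (mul_nonneg hB hB) (by linarith : (0:ℝ) ≤ σ),
    mul_nonneg (mul_nonneg (mul_nonneg hA hB) (by linarith : (0:ℝ) ≤ σ)) (by linarith : (0:ℝ) ≤ σ)]

private lemma aux_wt (W X d hh : ℝ) (hW : 0 ≤ W) (hX : 0 ≤ X) (hd : 0 ≤ d)
    (hd2 : d^2 ≤ (5/4)*hh) (hh1 : 1 ≤ hh) :
    (W + d*X)^2 ≤ 16*(W^2 + hh*(X^2/4)) := by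
  nlinarith [sq_nonneg (W - d*X), mul_nonneg (sub_nonneg.2 hd2) (sq_nonneg X), sq_nonneg W,
    mul_nonneg (sub_nonneg.2 hh1) (sq_nonneg X)]

private lemma aux_d (d σ hh : ℝ) (hd0 : 0 ≤ d) (hσ : 0 ≤ σ) (hd2 : d^2 ≤ (5/4)*hh)
    (hhσ : hh ≤ σ^2) : d ≤ (5/4)*σ := by
  apply sq_le_imp (by positivity)
  nlinarith

private lemma aux_sq1 (x ps q E : ℝ) (h1 : x^2/4 ≤ ps) (h2 : ps ≤ q^2*E^2) :
    x^2 ≤ (2*q*E)^2 := by nlinarith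

private lemma aux_sq2 (R ps q E : ℝ) (h1 : R^2 ≤ 16*ps) (h2 : ps ≤ q^2*E^2) :
    R^2 ≤ (4*q*E)^2 := by nlinarith

private lemma normSq_deriv {f : ℝ → ℂ} {f' : ℂ} {s : Set ℝ} {x : ℝ}
    (hf : HasDerivWithinAt f f' s x) :
    HasDerivWithinAt (fun t => Complex.normSq (f t))
      (2 * ((starRingEnd ℂ) (f x) * f').re) s x := by
  have hre : HasDerivWithinAt (fun t => (f t).re) ((Complex.reCLM : ℂ →L[ℝ] ℝ) f') s x :=
    Complex.reCLM.hasFDerivAt.comp_hasDerivWithinAt x hf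
  have him : HasDerivWithinAt (fun t => (f t).im) ((Complex.imCLM : ℂ →L[ℝ] ℝ) f') s x :=
    Complex.imCLM.hasFDerivAt.comp_hasDerivWithinAt x hf
  have h := (hre.mul hre).add (him.mul him)
  have heq : (fun t => (f t).re * (f t).re + (f t).im * (f t).im)
      = fun t => Complex.normSq (f t) := by
    funext t; simp [Complex.normSq_apply]
  rw [show (((fun t => (f t).re) * fun t => (f t).re) + (fun t => (f t).im) * fun t => (f t).im)
      = fun t => Complex.normSq (f t) from heq] at h
  refine h.congr_deriv ?_
  simp [Complex.mul_re]
  ring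

theorem stmt_14
    (n : ℕ)
    (g g' g'' : ℝ → ℝ)
    (hg_deriv : ∀ t ∈ Ici (0:ℝ), HasDerivWithinAt g (g' t) (Ici 0) t)
    (hg_deriv' : ∀ t ∈ Ici (0:ℝ), HasDerivWithinAt g' (g'' t) (Ici 0) t)
    (hg_cont : ContinuousOn g'' (Ici 0))
    (hD1 : ∀ t ∈ Ici (0:ℝ), 0 < g t ∧ g' t ≤ 0 ∧ 0 ≤ g'' t)
    (hD2 : ¬ IntegrableOn g (Ici 0))
    (hD3 : ∃ C₁ > (0:ℝ), ∃ C₂ > (0:ℝ), ∀ t ∈ Ici (0:ℝ),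
      |g' t| ≤ C₁ * g t * (1 / (1 + t)) ∧ |g'' t| ≤ C₂ * g t * (1 / (1 + t)) ^ 2)
    :
    ∃ C > (0:ℝ),
      ∀ (ξ : EuclideanSpace ℝ (Fin n)),
      ∀ (u u' u'' : ℝ → ℂ),
      (∀ t ∈ Ici (0:ℝ), HasDerivWithinAt u (u' t) (Ici 0) t) →
      (∀ t ∈ Ici (0:ℝ), HasDerivWithinAt u' (u'' t) (Ici 0) t) →
      ContinuousOn u'' (Ici 0) →
      (∀ t ∈ Ici (0:ℝ),
        u'' t + (‖ξ‖ : ℂ) ^ 2 * u t + (g t : ℂ) * (‖ξ‖ : ℂ) ^ 2 * u' t = 0) →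
      ∀ s t : ℝ, 0 ≤ s → s ≤ t →
        (∀ τ ∈ Icc s t, 3 * (1 - g' τ / 2) ≤ g τ ^ 2 * ‖ξ‖ ^ 2 ∧ g τ ^ 2 * ‖ξ‖ ^ 2 ≤ 5 * (1 - g' τ / 2)) →
        (∀ r : ℝ, 1 ≤ r →
          ‖ξ‖ ^ r * ‖u t‖ ≤
            C * Real.exp ((-(‖ξ‖ ^ 2 / 6)) * ∫ τ in s..t, g τ) *
              (‖ξ‖ ^ r * ‖u s‖ + ‖ξ‖ ^ (r - 1) * ‖u' s‖)) ∧
        (∀ r : ℝ, 0 ≤ r →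
          ‖ξ‖ ^ r * ‖u' t‖ ≤
            C * Real.exp ((-(‖ξ‖ ^ 2 / 6)) * ∫ τ in s..t, g τ) *
              (‖ξ‖ ^ (r + 1) * ‖u s‖ + ‖ξ‖ ^ r * ‖u' s‖)) := by
  classical
  obtain ⟨C₁, hC₁, C₂, hC₂, hD3'⟩ := hD3
  have hgc : ContinuousOn g (Ici 0) := fun x hx => (hg_deriv x hx).continuousWithinAt
  have hgc' : ContinuousOn g' (Ici 0) := fun x hx => (hg_deriv' x hx).continuousWithinAt
  have hg0 : 0 < g 0 := (hD1 0 (Set.mem_Ici.2 le_rfl)).1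
  -- g is antitone on Ici 0
  have hganti : AntitoneOn g (Ici 0) := by
    apply antitoneOn_of_hasDerivWithinAt_nonpos (convex_Ici 0) hgc (f' := g')
    · intro x hx
      rw [interior_Ici] at hx
      exact (hg_deriv x (Set.mem_Ici.2 hx.le)).mono (by rw [interior_Ici]; exact fun y hy => Set.mem_Ici.2 (le_of_lt hy))
    · intro x hx
      rw [interior_Ici] at hx
      exact (hD1 x (Set.mem_Ici.2 hx.le)).2.1
  set H₀ : ℝ := 1 + C₁ * g 0 / 2 with hH₀def
  clear_value H₀
  have hH₀ : 1 ≤ H₀ := by rw [hH₀def]; linarith only [mul_pos hC₁ hg0]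
  set σ : ℝ := Real.sqrt H₀ with hσdef
  clear_value σ
  have hσ1 : 1 ≤ σ := by
    rw [hσdef, show (1:ℝ) = Real.sqrt 1 by simp]
    exact Real.sqrt_le_sqrt hH₀
  have hσ2 : σ ^ 2 = H₀ := by rw [hσdef]; exact Real.sq_sqrt (by linarith)
  set K : ℝ := (7/4) * σ + 1 with hKdef
  clear_value K
  have hK1 : 1 ≤ K := by rw [hKdef]; linarith only [hσ1]
  refine ⟨4 * K, by linarith only [hK1], ?_⟩
  intro ξ u u' u'' hu hu' hu''c heq s t hs hst hz
  set k : ℝ := ‖ξ‖ with hkdef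
  clear_value k
  -- k > 0
  have hk : 0 < k := by
    rcases lt_or_eq_of_le (norm_nonneg ξ) with h | h
    · exact hkdef ▸ h
    · exfalso
      have h1 := (hz s (left_mem_Icc.2 hst)).1
      have h2 := (hD1 s hs).2.1
      have hk0 : k = 0 := by rw [hkdef, ← h]
      rw [hk0] at h1
      linarith only [h1, h2]
  clear hkdef
  clear ξ
  -- bound on h(τ) = 1 - g' τ / 2
  have hhbound : ∀ τ ∈ Ici (0:ℝ), 1 ≤ 1 - g' τ / 2 ∧ 1 - g' τ / 2 ≤ H₀ := by
    intro τ hτ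
    have h1 := (hD1 τ hτ).2.1
    have h2 := (hD3' τ hτ).1
    have h3 : g τ ≤ g 0 := hganti (Set.mem_Ici.2 le_rfl) hτ hτ
    have h4 : 0 < g τ := (hD1 τ hτ).1
    have h5 : 1 / (1 + τ) ≤ 1 := by
      rw [div_le_one (by linarith [hτ.out])]; linarith [hτ.out]
    have h6 : |g' τ| ≤ C₁ * g 0 := by
      calc |g' τ| ≤ C₁ * g τ * (1 / (1 + τ)) := h2
        _ ≤ C₁ * g τ * 1 := by
            apply mul_le_mul_of_nonneg_left h5
            exact mul_nonneg hC₁.le h4.le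
        _ ≤ C₁ * g 0 := by linarith only [mul_le_mul_of_nonneg_left h3 hC₁.le]
    constructor
    · linarith
    · have h7 := abs_le.mp h6
      rw [hH₀def]; linarith [h7.1]
  -- the auxiliary functions
  set w : ℝ → ℂ := fun τ => u' τ + ((g τ * (k^2/2) : ℝ) : ℂ) * u τ with hwdef
  clear_value w
  set ψ : ℝ → ℝ := fun τ => Complex.normSq (w τ) + ((1 - g' τ / 2) * (k^2/4)) * Complex.normSq (u τ) with hψdef
  clear_value ψ
  have hψnonneg : ∀ τ ∈ Ici (0:ℝ), 0 ≤ ψ τ := by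
    intro τ hτ
    have h0 : (0:ℝ) ≤ 1 - g' τ / 2 := by linarith only [(hhbound τ hτ).1]
    have h1 := Complex.normSq_nonneg (w τ)
    have h3 := mul_nonneg (mul_nonneg h0 (by positivity : (0:ℝ) ≤ k^2/4))
      (Complex.normSq_nonneg (u τ))
    simp only [hψdef]
    linarith only [h1, h3]
  -- derivative of w
  set w' : ℝ → ℂ := fun τ => u'' τ + (((g' τ * (k^2/2) : ℝ) : ℂ) * u τ + ((g τ * (k^2/2) : ℝ) : ℂ) * u' τ) with hw'def
  clear_value w'
  have hwderiv : ∀ τ ∈ Ici (0:ℝ), HasDerivWithinAt w (w' τ) (Ici 0) τ := by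
    intro τ hτ
    simp only [hwdef, hw'def]
    apply (hu' τ hτ).add
    have hcoef : HasDerivWithinAt (fun x => ((g x * (k^2/2) : ℝ) : ℂ)) ((g' τ * (k^2/2) : ℝ) : ℂ) (Ici 0) τ := by
      have h1 : HasDerivWithinAt (fun x => g x * (k^2/2)) (g' τ * (k^2/2)) (Ici 0) τ :=
        (hg_deriv τ hτ).mul_const _
      exact Complex.ofRealCLM.hasFDerivAt.comp_hasDerivWithinAt τ h1
    exact hcoef.mul (hu τ hτ)
  -- derivative of ψ
  set ψ' : ℝ → ℝ := fun τ =>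
    2 * ((starRingEnd ℂ) (w τ) * w' τ).re +
      ((-(g'' τ / 2) * (k^2/4)) * Complex.normSq (u τ) +
        ((1 - g' τ / 2) * (k^2/4)) * (2 * ((starRingEnd ℂ) (u τ) * u' τ).re)) with hψ'def
  clear_value ψ'
  have hψderiv : ∀ τ ∈ Ici (0:ℝ), HasDerivWithinAt ψ (ψ' τ) (Ici 0) τ := by
    intro τ hτ
    simp only [hψdef, hψ'def]
    apply (normSq_deriv (hwderiv τ hτ)).add
    have hcoef : HasDerivWithinAt (fun x => (1 - g' x / 2) * (k^2/4)) (-(g'' τ / 2) * (k^2/4)) (Ici 0) τ := by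
      have h1 : HasDerivWithinAt (fun x => 1 - g' x / 2) (-(g'' τ / 2)) (Ici 0) τ :=
        ((hg_deriv' τ hτ).div_const 2).const_sub 1
      exact h1.mul_const _
    exact hcoef.mul (normSq_deriv (hu τ hτ))
  -- key differential inequality
  have hcore : ∀ τ ∈ Icc s t, ψ' τ + (k^2/3) * g τ * ψ τ ≤ 0 := by
    intro τ hτ
    have hτ0 : τ ∈ Ici (0:ℝ) := le_trans hs hτ.1
    obtain ⟨h3, h5⟩ := hz τ hτ
    have hh1 := (hhbound τ hτ0).1
    have hG : 0 < g τ := (hD1 τ hτ0).1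
    have hG'' : 0 ≤ g'' τ := (hD1 τ hτ0).2.2
    have hode := heq τ hτ0
    have hwid : w' τ = ((g τ^2 * k^4/4 - (1 - g' τ/2) * k^2 : ℝ) : ℂ) * u τ
        - ((g τ * (k^2/2) : ℝ) : ℂ) * w τ := by
      simp only [hw'def, hwdef]
      push_cast
      linear_combination hode
    have huw : u' τ = w τ - ((g τ * (k^2/2) : ℝ):ℂ) * u τ := by
      simp only [hwdef]; ring
    have hre1 : ((starRingEnd ℂ) (w τ) * w' τ).re
        = (g τ^2*k^4/4 - (1-g' τ/2)*k^2) * ((starRingEnd ℂ) (w τ) * u τ).re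
          - (g τ * (k^2/2)) * Complex.normSq (w τ) := by
      rw [hwid]
      simp only [Complex.mul_re, Complex.mul_im, Complex.sub_re, Complex.sub_im,
        Complex.ofReal_re, Complex.ofReal_im, Complex.conj_re, Complex.conj_im,
        Complex.normSq_apply]
      ring
    have hre2 : ((starRingEnd ℂ) (u τ) * u' τ).re
        = ((starRingEnd ℂ) (w τ) * u τ).re - (g τ * (k^2/2)) * Complex.normSq (u τ) := by
      rw [huw]
      simp only [Complex.mul_re, Complex.mul_im, Complex.sub_re, Complex.sub_im,
        Complex.ofReal_re, Complex.ofReal_im, Complex.conj_re, Complex.conj_im,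
        Complex.normSq_apply]
      ring
    have hCS : (((starRingEnd ℂ) (w τ) * u τ).re)^2
        ≤ Complex.normSq (w τ) * Complex.normSq (u τ) := by
      have h1 : (((starRingEnd ℂ) (w τ) * u τ).re)^2
          ≤ Complex.normSq ((starRingEnd ℂ) (w τ) * u τ) := by
        rw [Complex.normSq_apply]
        linarith only [sq_nonneg (((starRingEnd ℂ) (w τ) * u τ).im),
          sq_nonneg (((starRingEnd ℂ) (w τ) * u τ).re)]
      rwa [map_mul, Complex.normSq_conj] at h1
    have hhk0 : (0:ℝ) ≤ (1 - g' τ/2) * k^2 :=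
      mul_nonneg (by linarith only [hh1]) (sq_nonneg k)
    have ha0 : 0 ≤ Real.sqrt ((1 - g' τ/2) * k^2) := Real.sqrt_nonneg _
    have ha2 : (Real.sqrt ((1 - g' τ/2) * k^2))^2 = (1 - g' τ/2) * k^2 := Real.sq_sqrt hhk0
    have hale : Real.sqrt ((1 - g' τ/2) * k^2) ≤ (3/5)*(g τ * k^2) := by
      apply sq_le_imp (mul_nonneg (by norm_num) (mul_nonneg hG.le (sq_nonneg k)))
      rw [ha2]
      linarith only [mul_le_mul_of_nonneg_right h3 (sq_nonneg k), sq_nonneg (g τ * k^2)]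
    have hfin := core_ineq (g τ) (g' τ) (g'' τ) k (Complex.normSq (u τ)) (Complex.normSq (w τ))
      (((starRingEnd ℂ) (w τ) * u τ).re) (Real.sqrt ((1 - g' τ/2) * k^2))
      hG hG'' hk hh1 h3 h5 (Complex.normSq_nonneg _) (Complex.normSq_nonneg _) hCS ha0 ha2 hale
    simp only [hψ'def, hψdef]
    rw [hre1, hre2]
    linarith only [hfin]
  -- Gronwall
  have hgron : ψ t ≤ ψ s * Real.exp (-(k^2/3) * ∫ τ in s..t, g τ) := by
    set B : ℝ → ℝ := fun x => ∫ y in s..x, g y with hBdef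
    have hsub : Icc s t ⊆ Ici (0:ℝ) := fun x hx => le_trans hs hx.1
    have hint : ∀ τ ∈ Icc s t, IntervalIntegrable g volume s τ := by
      intro τ hτ
      apply ContinuousOn.intervalIntegrable
      apply hgc.mono
      rw [uIcc_of_le hτ.1]
      exact fun x hx => le_trans hs hx.1
    have hψcont : ContinuousOn ψ (Icc s t) := fun x hx =>
      ((hψderiv x (hsub hx)).continuousWithinAt).mono hsub
    have hBcont : ContinuousOn B (Icc s t) := by
      have h0 := intervalIntegral.continuousOn_primitive_interval
        (f := g) (μ := volume) (a := s) (b := t) ?_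
      · rwa [uIcc_of_le hst] at h0
      · rw [uIcc_of_le hst]
        exact (hgc.mono hsub).integrableOn_compact isCompact_Icc
    have hΘcont : ContinuousOn (fun x => ψ x * Real.exp ((k^2/3) * B x)) (Icc s t) :=
      hψcont.mul (Real.continuous_exp.comp_continuousOn (continuousOn_const.mul hBcont))
    have hanti : AntitoneOn (fun x => ψ x * Real.exp ((k^2/3) * B x)) (Icc s t) := by
      apply antitoneOn_of_hasDerivWithinAt_nonpos (convex_Icc s t) hΘcont
        (f' := fun τ => ψ' τ * Real.exp ((k^2/3) * B τ) +
          ψ τ * (((k^2/3) * g τ) * Real.exp ((k^2/3) * B τ)))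
      · intro x hx
        rw [interior_Icc] at hx
        have hx0 : 0 < x := lt_of_le_of_lt hs hx.1
        have hBd : HasDerivAt B (g x) x := by
          have hca : ContinuousAt g x := hgc.continuousAt (Ici_mem_nhds hx0)
          refine intervalIntegral.integral_hasDerivAt_right (hint x ⟨hx.1.le, hx.2.le⟩) ?_ hca
          exact ⟨Ioi 0, Ioi_mem_nhds hx0, (hgc.mono (fun y hy => le_of_lt hy)).aestronglyMeasurable measurableSet_Ioi⟩
        have hψx : HasDerivAt ψ (ψ' x) x := (hψderiv x hx0.le).hasDerivAt (Ici_mem_nhds hx0)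
        have hexp : HasDerivAt (fun y => Real.exp ((k^2/3) * B y))
            (((k^2/3) * g x) * Real.exp ((k^2/3) * B x)) x := by
          have h1 : HasDerivAt (fun y => (k^2/3) * B y) ((k^2/3) * g x) x := hBd.const_mul _
          have h2 := h1.exp
          convert h2 using 1
          ring
        rw [interior_Icc]
        exact (hψx.mul hexp).hasDerivWithinAt
      · intro x hx
        rw [interior_Icc] at hx
        have h := hcore x (Ioo_subset_Icc_self hx)
        have hexp : 0 < Real.exp ((k^2/3) * B x) := Real.exp_pos _
        linarith only [mul_le_mul_of_nonneg_right h hexp.le]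
    have hΘ : ψ t * Real.exp ((k^2/3) * B t) ≤ ψ s * Real.exp ((k^2/3) * B s) :=
      hanti (left_mem_Icc.2 hst) (right_mem_Icc.2 hst) hst
    have hBs : B s = 0 := intervalIntegral.integral_same
    rw [hBs, mul_zero, Real.exp_zero, mul_one] at hΘ
    have hexpt : 0 < Real.exp (-(k^2/3) * B t) := Real.exp_pos _
    have hfin := mul_le_mul_of_nonneg_right hΘ hexpt.le
    show ψ t ≤ ψ s * Real.exp (-(k ^ 2 / 3) * B t)
    calc ψ t = ψ t * Real.exp ((k^2/3) * B t) * Real.exp (-(k^2/3) * B t) := by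
          rw [mul_assoc, ← Real.exp_add, show (k^2/3) * B t + -(k^2/3) * B t = 0 by ring,
            Real.exp_zero, mul_one]
      _ ≤ ψ s * Real.exp (-(k^2/3) * B t) := hfin
  -- endpoint bounds
  set E : ℝ := Real.exp ((-(k ^ 2 / 6)) * ∫ τ in s..t, g τ) with hEdef
  clear_value E
  have hE : 0 < E := by rw [hEdef]; exact Real.exp_pos _
  have hmain : k * ‖u t‖ ≤ 4 * K * E * (k * ‖u s‖ + ‖u' s‖) ∧
      ‖u' t‖ ≤ 4 * K * E * (k * ‖u s‖ + ‖u' s‖) := by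
    clear hg_deriv hg_deriv' hg_cont hu hu' hu''c heq hwderiv hψderiv hψnonneg hcore
    clear hD2 hD3' hgc hgc' hganti hw'def hψ'def w' ψ' u''
    have hts : t ∈ Ici (0:ℝ) := le_trans hs hst
    have hzs := hz s (left_mem_Icc.2 hst)
    have hzt := hz t (right_mem_Icc.2 hst)
    have hhs := hhbound s hs
    have hht := hhbound t hts
    have hgs := (hD1 s hs).1
    have hgt := (hD1 t hts).1
    have h2K : (0:ℝ) ≤ K := by linarith only [hK1]
    have hσ0 : (0:ℝ) ≤ σ := by linarith only [hσ1]
    have hns : ∀ z : ℂ, Complex.normSq z = ‖z‖^2 := fun z => by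
      rw [Complex.normSq_eq_norm_sq]
    have hE2 : Real.exp (-(k^2/3) * ∫ τ in s..t, g τ) = E^2 := by
      rw [hEdef, ← Real.exp_nat_mul]
      congr 1; push_cast; ring
    have hA : (0:ℝ) ≤ k * ‖u s‖ := by positivity
    have hB : (0:ℝ) ≤ ‖u' s‖ := norm_nonneg _
    have hQ0 : (0:ℝ) ≤ k * ‖u s‖ + ‖u' s‖ := add_nonneg hA hB
    have hKQ : (0:ℝ) ≤ K * (k * ‖u s‖ + ‖u' s‖) := mul_nonneg h2K hQ0
    -- bound on ψ s
    have hψs : ψ s ≤ (K * (k * ‖u s‖ + ‖u' s‖))^2 := by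
      have hwsle : ‖w s‖ ≤ ‖u' s‖ + (g s * k / 2) * (k * ‖u s‖) := by
        have h0 : ‖w s‖ ≤ ‖u' s‖ + ‖((g s * (k^2/2) : ℝ):ℂ) * u s‖ := by
          simp only [hwdef]; exact norm_add_le _ _
        have h2 : ‖((g s * (k^2/2) : ℝ):ℂ) * u s‖ = (g s * (k^2/2)) * ‖u s‖ := by
          rw [norm_mul, Complex.norm_real, Real.norm_eq_abs,
            abs_of_nonneg (mul_nonneg hgs.le (by positivity))]
        have h3 : (g s * (k^2/2)) * ‖u s‖ = (g s * k / 2) * (k * ‖u s‖) := by ring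
        rw [h2, h3] at h0; exact h0
      have hhσs : 1 - g' s / 2 ≤ σ^2 := by rw [hσ2]; exact hhs.2
      have hd : g s * k / 2 ≤ (5/4) * σ := by
        apply aux_d _ _ (1 - g' s / 2)
          (div_nonneg (mul_nonneg hgs.le hk.le) (by norm_num)) hσ0 ?_ hhσs
        linarith only [hzs.2]
      have hle : ‖w s‖ ≤ ‖u' s‖ + (5/4*σ) * (k * ‖u s‖) :=
        le_trans hwsle (add_le_add le_rfl (mul_le_mul_of_nonneg_right hd hA))
      have haux := aux_psis σ (k*‖u s‖) ‖u' s‖ ‖w s‖ (1 - g' s / 2) hσ1 hA hB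
        (norm_nonneg _) hhσs hle
      have hψse : ψ s = ‖w s‖^2 + (1 - g' s / 2) * (k^2/4) * ‖u s‖^2 := by
        simp only [hψdef]; rw [hns (w s), hns (u s)]
      rw [hψse, hKdef]
      linarith only [haux]
    have hψt2 : ψ t ≤ (K * (k * ‖u s‖ + ‖u' s‖))^2 * E^2 := by
      rw [← hE2]
      exact le_trans hgron (mul_le_mul_of_nonneg_right hψs
        (Real.exp_pos (-(k^2/3) * ∫ τ in s..t, g τ)).le)
    have hψte : ψ t = ‖w t‖^2 + (1 - g' t / 2) * (k^2/4) * ‖u t‖^2 := by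
      simp only [hψdef]; rw [hns (w t), hns (u t)]
    have hψtw : ‖w t‖^2 ≤ ψ t := by
      rw [hψte]
      have h0 := mul_nonneg (mul_nonneg (show (0:ℝ) ≤ 1 - g' t / 2 by linarith only [hht.1])
        (by positivity : (0:ℝ) ≤ k^2/4)) (sq_nonneg ‖u t‖)
      linarith only [h0]
    have hψtu : (k * ‖u t‖)^2/4 ≤ ψ t := by
      rw [hψte]
      have h0 := mul_nonneg (mul_nonneg (show (0:ℝ) ≤ (1 - g' t / 2) - 1 by linarith only [hht.1])
        (by positivity : (0:ℝ) ≤ k^2/4)) (sq_nonneg ‖u t‖)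
      linarith only [h0, sq_nonneg ‖w t‖]
    -- first bound
    have hsq1 := aux_sq1 (k*‖u t‖) (ψ t) (K*(k*‖u s‖+‖u' s‖)) E hψtu hψt2
    have h1 : k * ‖u t‖ ≤ 2*(K*(k*‖u s‖+‖u' s‖))*E :=
      sq_le_imp (mul_nonneg (mul_nonneg (by norm_num : (0:ℝ) ≤ 2) hKQ) hE.le) hsq1
    -- second bound
    have hu't : ‖u' t‖ ≤ ‖w t‖ + (g t * k / 2) * (k * ‖u t‖) := by
      have h0 : u' t = w t - ((g t * (k^2/2) : ℝ):ℂ) * u t := by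
        simp only [hwdef]; ring
      have h0' : ‖u' t‖ ≤ ‖w t‖ + ‖((g t * (k^2/2) : ℝ):ℂ) * u t‖ := by
        rw [h0]; exact norm_sub_le _ _
      have h2 : ‖((g t * (k^2/2) : ℝ):ℂ) * u t‖ = (g t * k / 2) * (k * ‖u t‖) := by
        rw [norm_mul, Complex.norm_real, Real.norm_eq_abs,
          abs_of_nonneg (mul_nonneg hgt.le (by positivity))]
        ring
      rw [h2] at h0'; exact h0'
    have hR2 : (‖w t‖ + (g t * k / 2) * (k * ‖u t‖))^2 ≤ 16 * ψ t := by
      have haux := aux_wt ‖w t‖ (k*‖u t‖) (g t * k / 2) (1 - g' t / 2) (norm_nonneg _)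
        (by positivity) (div_nonneg (mul_nonneg hgt.le hk.le) (by norm_num))
        (by linarith only [hzt.2]) hht.1
      linarith only [haux, hψte.ge, hψte.le]
    have hsq2 := aux_sq2 (‖w t‖ + (g t * k / 2) * (k * ‖u t‖)) (ψ t)
      (K*(k*‖u s‖+‖u' s‖)) E hR2 hψt2
    have h2 : ‖u' t‖ ≤ 4*(K*(k*‖u s‖+‖u' s‖))*E :=
      le_trans hu't (sq_le_imp
        (mul_nonneg (mul_nonneg (by norm_num : (0:ℝ) ≤ 4) hKQ) hE.le) hsq2)
    have hKQE : (0:ℝ) ≤ K * (k*‖u s‖+‖u' s‖) * E := mul_nonneg hKQ hE.le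
    constructor
    · linarith only [h1, hKQE]
    · linarith only [h2]
  -- conclude with rpow algebra
  constructor
  · intro r hr
    have hpow : k ^ r = k ^ (r - 1) * k := by
      rw [← Real.rpow_add_one hk.ne' (r - 1)]; ring_nf
    have hnn : 0 ≤ k ^ (r - 1) := Real.rpow_nonneg hk.le _
    calc k ^ r * ‖u t‖ = k ^ (r-1) * (k * ‖u t‖) := by rw [hpow]; ring
      _ ≤ k ^ (r-1) * (4 * K * E * (k * ‖u s‖ + ‖u' s‖)) :=
          mul_le_mul_of_nonneg_left hmain.1 hnn
      _ = 4 * K * E * (k ^ r * ‖u s‖ + k ^ (r-1) * ‖u' s‖) := by rw [hpow]; ring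
  · intro r hr
    have hpow : k ^ (r + 1) = k ^ r * k := Real.rpow_add_one hk.ne' r
    have hnn : 0 ≤ k ^ r := Real.rpow_nonneg hk.le _
    calc k ^ r * ‖u' t‖ ≤ k ^ r * (4 * K * E * (k * ‖u s‖ + ‖u' s‖)) :=
          mul_le_mul_of_nonneg_left hmain.2 hnn
      _ = 4 * K * E * (k ^ (r+1) * ‖u s‖ + k ^ r * ‖u' s‖) := by rw [hpow]; ring
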